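/- Let T > 0, let A : ℝ → ℍ^{n×n} be continuous with A(t+T) = A(t), let M be a fundamental matrix of ẋ = A(t)x, and let ρ₁, …, ρₙ be the characteristic multipliers (the standard eigenvalues of the monodromy matrix M(0)⁻¹M(T), with multiplicity). Then ∏_{j=1}^n |ρ_j| = exp(∫₀^T Re(tr A(τ)) dτ). Consequently, if μ₁, …, μₙ ∈ ℂ satisfy e^{μ_j T} = ρ_j for each j, then Re(Σ_{j=1}^n μ_j) = (1/T)·∫₀^T Re(tr A(τ)) dτ. -/

import Mathlib

open Matrix Polynomial
open scoped Quaternion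

noncomputable section

/-- The two complex components of a quaternion: `q = c1 q + (c2 q) * j`,
identifying `ℂ` with the real span of `1` and `i` in `ℍ`. -/
def Quaternion.c1 (q : ℍ[ℝ]) : ℂ := ⟨q.re, q.imI⟩

def Quaternion.c2 (q : ℍ[ℝ]) : ℂ := ⟨q.imJ, q.imK⟩

/-- The embedding of `ℂ` into `ℍ` as the real span of `1` and `i`. -/
def Complex.toQuat (z : ℂ) : ℍ[ℝ] := ⟨z.re, z.im, 0, 0⟩

/-- The complex adjoint matrix `χ_A` of a quaternion matrix `A = A₁ + A₂·j`:
the block matrix `[[A₁, A₂], [-conj A₂, conj A₁]]`. -/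
def chiMat {n : ℕ} (A : Matrix (Fin n) (Fin n) ℍ[ℝ]) :
    Matrix (Fin n ⊕ Fin n) (Fin n ⊕ Fin n) ℂ :=
  Matrix.fromBlocks (A.map Quaternion.c1) (A.map Quaternion.c2)
    ((-(A.map Quaternion.c2)).map (starRingEnd ℂ)) ((A.map Quaternion.c1).map (starRingEnd ℂ))

/-- `ρ` is a standard eigenvalue of the quaternion matrix `A`: an eigenvalue of the
complex adjoint matrix `χ_A` with nonnegative imaginary part. -/
def IsStdEigenvalue {n : ℕ} (A : Matrix (Fin n) (Fin n) ℍ[ℝ]) (ρ : ℂ) : Prop :=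
  (chiMat A).charpoly.IsRoot ρ ∧ 0 ≤ ρ.im

/-- `s` is the multiset of standard eigenvalues of `A` counted with multiplicity:
it has `n` elements, all with nonnegative imaginary part, and the characteristic
polynomial of `χ_A` is `∏_{z ∈ s} (X - z)·(X - conj z)`. -/
def IsStdEigs {n : ℕ} (A : Matrix (Fin n) (Fin n) ℍ[ℝ]) (s : Multiset ℂ) : Prop :=
  Multiset.card s = n ∧ (∀ z ∈ s, 0 ≤ z.im) ∧
    (chiMat A).charpoly =
      (s.map (fun z => (X - C z) * (X - C (starRingEnd ℂ z)))).prod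

/-- `x : ℝ → ℍ^n` is a solution of the linear quaternionic system `ẋ = A(t)x`. -/
def IsSol {n : ℕ} (A : ℝ → Matrix (Fin n) (Fin n) ℍ[ℝ]) (x : ℝ → Fin n → ℍ[ℝ]) : Prop :=
  ∀ t : ℝ, HasDerivAt x ((A t).mulVec (x t)) t

/-- The norm `‖x‖ = Σ_k |x_k|` on `ℍ^n`. -/
def vecNorm {n : ℕ} (x : Fin n → ℍ[ℝ]) : ℝ := ∑ k, ‖x k‖

/-- The norm `‖A‖ = Σ_{i,j} |a_{ij}|` on `ℍ^{n×n}`. -/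
def matNorm {n : ℕ} (A : Matrix (Fin n) (Fin n) ℍ[ℝ]) : ℝ := ∑ i, ∑ j, ‖A i j‖

/-- Stability (in the sense of Lyapunov) of the system `ẋ = A(t)x` at `t₀`. -/
def StableAt {n : ℕ} (A : ℝ → Matrix (Fin n) (Fin n) ℍ[ℝ]) (t₀ : ℝ) : Prop :=
  ∀ ε > (0:ℝ), ∃ δ > (0:ℝ), ∀ x : ℝ → Fin n → ℍ[ℝ], IsSol A x →
    vecNorm (x t₀) < δ → ∀ t ≥ t₀, vecNorm (x t) < ε

/-- Asymptotic stability of the system `ẋ = A(t)x` at `t₀`. -/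
def AsympStableAt {n : ℕ} (A : ℝ → Matrix (Fin n) (Fin n) ℍ[ℝ]) (t₀ : ℝ) : Prop :=
  StableAt A t₀ ∧ ∃ δ > (0:ℝ), ∀ x : ℝ → Fin n → ℍ[ℝ], IsSol A x →
    vecNorm (x t₀) < δ →
      Filter.Tendsto (fun t => vecNorm (x t)) Filter.atTop (nhds 0)

/-- `M` is a fundamental matrix of `ẋ = A(t)x`: entrywise `M'(t) = A(t)·M(t)`
and `M(t)` is invertible for every `t`. -/
def IsFundamental {n : ℕ} (A M : ℝ → Matrix (Fin n) (Fin n) ℍ[ℝ]) : Prop :=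
  (∀ (t : ℝ) (i j : Fin n), HasDerivAt (fun s => M s i j) ((A t * M t) i j) t) ∧
    ∀ t : ℝ, IsUnit (M t)


namespace Stmt14Aux

open Quaternion Finset

lemma c1_add (p q : ℍ[ℝ]) : Quaternion.c1 (p + q) = Quaternion.c1 p + Quaternion.c1 q := by
  simp [Quaternion.c1, Complex.ext_iff]

lemma c2_add (p q : ℍ[ℝ]) : Quaternion.c2 (p + q) = Quaternion.c2 p + Quaternion.c2 q := by
  simp [Quaternion.c2, Complex.ext_iff]

lemma c1_smul (r : ℝ) (q : ℍ[ℝ]) : Quaternion.c1 (r • q) = r • Quaternion.c1 q := by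
  simp [Quaternion.c1, Complex.ext_iff]

lemma c2_smul (r : ℝ) (q : ℍ[ℝ]) : Quaternion.c2 (r • q) = r • Quaternion.c2 q := by
  simp [Quaternion.c2, Complex.ext_iff]

lemma c1_one : Quaternion.c1 (1 : ℍ[ℝ]) = 1 := by simp [Quaternion.c1, Complex.ext_iff]
lemma c2_one : Quaternion.c2 (1 : ℍ[ℝ]) = 0 := by simp [Quaternion.c2, Complex.ext_iff]
lemma c1_zero : Quaternion.c1 (0 : ℍ[ℝ]) = 0 := by simp [Quaternion.c1, Complex.ext_iff]
lemma c2_zero : Quaternion.c2 (0 : ℍ[ℝ]) = 0 := by simp [Quaternion.c2, Complex.ext_iff]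

lemma c1_mul (p q : ℍ[ℝ]) :
    Quaternion.c1 (p * q) = Quaternion.c1 p * Quaternion.c1 q
      - Quaternion.c2 p * (starRingEnd ℂ) (Quaternion.c2 q) := by
  simp [Quaternion.c1, Quaternion.c2, Complex.ext_iff, Quaternion.re_mul, Quaternion.imI_mul,
    Complex.mul_re, Complex.mul_im]
  constructor <;> ring

lemma c2_mul (p q : ℍ[ℝ]) :
    Quaternion.c2 (p * q) = Quaternion.c1 p * Quaternion.c2 q
      + Quaternion.c2 p * (starRingEnd ℂ) (Quaternion.c1 q) := by
  simp [Quaternion.c1, Quaternion.c2, Complex.ext_iff, Quaternion.imJ_mul, Quaternion.imK_mul,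
    Complex.mul_re, Complex.mul_im]
  constructor <;> ring

def c1L : ℍ[ℝ] →ₗ[ℝ] ℂ := { toFun := Quaternion.c1, map_add' := c1_add, map_smul' := c1_smul }
def c2L : ℍ[ℝ] →ₗ[ℝ] ℂ := { toFun := Quaternion.c2, map_add' := c2_add, map_smul' := c2_smul }

lemma c1_sum {α} (s : Finset α) (f : α → ℍ[ℝ]) :
    Quaternion.c1 (∑ k ∈ s, f k) = ∑ k ∈ s, Quaternion.c1 (f k) :=
  map_sum c1L.toAddMonoidHom f s

lemma c2_sum {α} (s : Finset α) (f : α → ℍ[ℝ]) :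
    Quaternion.c2 (∑ k ∈ s, f k) = ∑ k ∈ s, Quaternion.c2 (f k) :=
  map_sum c2L.toAddMonoidHom f s

lemma chiMat_one {n : ℕ} : chiMat (1 : Matrix (Fin n) (Fin n) ℍ[ℝ]) = 1 := by
  ext (i|i) (j|j) <;>
    simp [chiMat, Matrix.one_apply, apply_ite, c1_one, c2_one, c1_zero, c2_zero]

lemma chiMat_mul {n : ℕ} (X Y : Matrix (Fin n) (Fin n) ℍ[ℝ]) :
    chiMat (X * Y) = chiMat X * chiMat Y := by
  ext (i|i) (j|j) <;>
    simp only [chiMat, Matrix.mul_apply, Matrix.fromBlocks_apply₁₁, Matrix.fromBlocks_apply₁₂,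
      Matrix.fromBlocks_apply₂₁, Matrix.fromBlocks_apply₂₂, Matrix.map_apply, Matrix.neg_apply,
      Fintype.sum_sum_type, c1_sum, c2_sum, c1_mul, c2_mul, map_sum, _root_.map_mul, map_sub,
      map_add, map_neg, Complex.conj_conj, Finset.sum_add_distrib, Finset.sum_sub_distrib,
      Finset.sum_neg_distrib] <;>
    simp only [neg_mul, mul_neg, Finset.sum_neg_distrib] <;>
    ring

lemma trace_chiMat {n : ℕ} (B : Matrix (Fin n) (Fin n) ℍ[ℝ]) :
    Matrix.trace (chiMat B) = ((2 * (Matrix.trace B).re : ℝ) : ℂ) := by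
  simp only [Matrix.trace, Fintype.sum_sum_type, Matrix.diag_apply, chiMat,
    Matrix.fromBlocks_apply₁₁, Matrix.fromBlocks_apply₂₂, Matrix.map_apply]
  rw [← Finset.sum_add_distrib]
  have h1 : ∀ i : Fin n, (B i i).c1 + (starRingEnd ℂ) (B i i).c1
      = (((B i i).re : ℝ) : ℂ) + (((B i i).re : ℝ) : ℂ) := by
    intro i
    simp [Quaternion.c1, Complex.ext_iff]
  rw [Finset.sum_congr rfl fun i _ => h1 i, Finset.sum_add_distrib, ← Complex.ofReal_sum]
  have h2 : ∑ i : Fin n, ((B i i).re : ℝ) = (∑ i : Fin n, B i i).re := by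
    induction (Finset.univ : Finset (Fin n)) using Finset.induction with
    | empty => simp
    | insert a s h ih => simp_all [Finset.sum_insert h]
  rw [h2]
  push_cast
  ring

lemma hasDerivAt_det {m : Type*} [Fintype m] [DecidableEq m]
    (N : ℝ → Matrix m m ℂ) (N' : Matrix m m ℂ) (x : ℝ)
    (h : ∀ i j, HasDerivAt (fun t => N t i j) (N' i j) x) :
    HasDerivAt (fun t => (N t).det)
      (∑ i, ((N x).updateRow i (N' i)).det) x := by
  have key : ∀ σ : Equiv.Perm m, HasDerivAt (fun t => ∏ i, N t (σ i) i)
      (∑ i, (∏ j ∈ Finset.univ.erase i, N x (σ j) j) • N' (σ i) i) x := by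
    intro σ
    exact HasDerivAt.fun_finsetProd (fun i _ => h (σ i) i)
  have main : HasDerivAt (fun t => (N t).det)
      (∑ σ : Equiv.Perm m, (Equiv.Perm.sign σ : ℂ) *
        ∑ i, (∏ j ∈ Finset.univ.erase i, N x (σ j) j) • N' (σ i) i) x := by
    simp_rw [Matrix.det_apply']
    exact HasDerivAt.fun_sum (fun σ _ => (key σ).const_mul _)
  convert main using 1
  calc ∑ i, ((N x).updateRow i (N' i)).det
      = ∑ i, ∑ σ : Equiv.Perm m, (Equiv.Perm.sign σ : ℂ) *
          ∏ j, (N x).updateRow i (N' i) (σ j) j := by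
        simp_rw [Matrix.det_apply']
    _ = ∑ σ : Equiv.Perm m, ∑ i, (Equiv.Perm.sign σ : ℂ) *
          ∏ j, (N x).updateRow i (N' i) (σ j) j := Finset.sum_comm
    _ = ∑ σ : Equiv.Perm m, (Equiv.Perm.sign σ : ℂ) *
          ∑ i, (∏ j ∈ Finset.univ.erase i, N x (σ j) j) • N' (σ i) i := by
        refine Finset.sum_congr rfl fun σ _ => ?_
        rw [← Finset.mul_sum]
        congr 1
        rw [← Equiv.sum_comp σ (fun i => ∏ j, (N x).updateRow i (N' i) (σ j) j)]
        refine Finset.sum_congr rfl fun k _ => ?_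
        rw [← Finset.mul_prod_erase _ _ (Finset.mem_univ k)]
        rw [Matrix.updateRow_self]
        rw [smul_eq_mul, mul_comm]
        congr 1
        refine Finset.prod_congr rfl fun j hj => ?_
        rw [Matrix.updateRow_ne]
        exact fun hc => (Finset.ne_of_mem_erase hj) (σ.injective hc)

lemma hasDerivAt_c1 {f : ℝ → ℍ[ℝ]} {f' : ℍ[ℝ]} {x : ℝ} (hf : HasDerivAt f f' x) :
    HasDerivAt (fun t => Quaternion.c1 (f t)) (Quaternion.c1 f') x := by
  have := (c1L.toContinuousLinearMap.hasFDerivAt (x := f x)).comp_hasDerivAt x hf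
  exact this

lemma hasDerivAt_c2 {f : ℝ → ℍ[ℝ]} {f' : ℍ[ℝ]} {x : ℝ} (hf : HasDerivAt f f' x) :
    HasDerivAt (fun t => Quaternion.c2 (f t)) (Quaternion.c2 f') x := by
  have := (c2L.toContinuousLinearMap.hasFDerivAt (x := f x)).comp_hasDerivAt x hf
  exact this

lemma chiMat_entry_hasDerivAt {n : ℕ} {M : ℝ → Matrix (Fin n) (Fin n) ℍ[ℝ]}
    {D : Matrix (Fin n) (Fin n) ℍ[ℝ]} {x : ℝ}
    (h : ∀ i j, HasDerivAt (fun t => M t i j) (D i j) x) :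
    ∀ p q, HasDerivAt (fun t => chiMat (M t) p q) (chiMat D p q) x := by
  rintro (i|i) (j|j)
  · exact hasDerivAt_c1 (h i j)
  · exact hasDerivAt_c2 (h i j)
  · simpa [chiMat, RCLike.star_def] using ((hasDerivAt_c2 (h i j)).star).fun_neg
  · simpa [chiMat, RCLike.star_def] using (hasDerivAt_c1 (h i j)).star

/-- Liouville's formula, derivative form, for the complex adjoint. -/
lemma liouville {n : ℕ} (A M : ℝ → Matrix (Fin n) (Fin n) ℍ[ℝ])
    (hMd : ∀ (t : ℝ) (i j : Fin n), HasDerivAt (fun s => M s i j) ((A t * M t) i j) t)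
    (x : ℝ) :
    HasDerivAt (fun t => (chiMat (M t)).det)
      (Matrix.trace (chiMat (A x)) * (chiMat (M x)).det) x := by
  have h := hasDerivAt_det (fun t => chiMat (M t)) (chiMat (A x * M x)) x
    (chiMat_entry_hasDerivAt (hMd x))
  convert h using 1
  rw [chiMat_mul]
  have hrow : ∀ i, (chiMat (A x) * chiMat (M x)) i =
      ∑ k, (chiMat (A x)) i k • (chiMat (M x)) k := by
    intro i
    funext j
    simp [Matrix.mul_apply]
  calc Matrix.trace (chiMat (A x)) * (chiMat (M x)).det
      = ∑ i, (chiMat (A x)) i i • (chiMat (M x)).det := by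
        rw [Matrix.trace, ← Finset.sum_smul]
        simp [Matrix.diag, smul_eq_mul]
    _ = ∑ i, ((chiMat (M x)).updateRow i ((chiMat (A x) * chiMat (M x)) i)).det := by
        refine Finset.sum_congr rfl fun i _ => ?_
        rw [hrow i, Matrix.det_updateRow_sum]

end Stmt14Aux

/-- `∏_j |ρ_j| = exp(∫₀ᵀ Re(tr A))`, and if `e^{μ_j T} = ρ_j` then
`Re(Σ μ_j) = (1/T)∫₀ᵀ Re(tr A)`. -/
theorem stmt14 {n : ℕ} (T : ℝ) (hT : 0 < T) (A M : ℝ → Matrix (Fin n) (Fin n) ℍ[ℝ])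
    (hA : Continuous A) (hAper : ∀ t, A (t + T) = A t) (hM : IsFundamental A M)
    (ρ : Fin n → ℂ)
    (hρ : IsStdEigs (Ring.inverse (M 0) * M T) (Multiset.map ρ Finset.univ.val)) :
    (∏ j, ‖ρ j‖) = Real.exp (∫ τ in (0:ℝ)..T, (Matrix.trace (A τ)).re) ∧
    ∀ μ : Fin n → ℂ, (∀ j, Complex.exp (μ j * (T : ℂ)) = ρ j) →
      (∑ j, μ j).re = (1 / T) * ∫ τ in (0:ℝ)..T, (Matrix.trace (A τ)).re := by
  classical
  obtain ⟨hMd, hMu⟩ := hM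
  set I : ℝ := ∫ τ in (0:ℝ)..T, (Matrix.trace (A τ)).re with hIdef
  set r : ℝ → ℝ := fun t => 2 * (Matrix.trace (A t)).re with hrdef
  have hrcont : Continuous r := by
    have h1 : Continuous fun t => Matrix.trace (A t) := hA.matrix_trace
    exact continuous_const.mul (Quaternion.continuous_re.comp h1)
  set R : ℝ → ℝ := fun t => ∫ s in (0:ℝ)..t, r s with hRdef
  have hRderiv : ∀ t, HasDerivAt R (r t) t := fun t =>
    (hrcont.integral_hasStrictDerivAt 0 t).hasDerivAt
  set g : ℝ → ℂ := fun t => (chiMat (M t)).det with hgdef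
  have hgderiv : ∀ x, HasDerivAt g (((r x : ℝ) : ℂ) * g x) x := by
    intro x
    have := Stmt14Aux.liouville A M hMd x
    rwa [Stmt14Aux.trace_chiMat] at this
  set h : ℝ → ℂ := fun t => g t * Complex.exp (-((R t : ℝ) : ℂ)) with hhdef
  have hhderiv : ∀ x, HasDerivAt h 0 x := by
    intro x
    have e1 : HasDerivAt (fun t => -((R t : ℝ) : ℂ)) (-((r x : ℝ) : ℂ)) x :=
      ((hRderiv x).ofReal_comp).neg
    have e2 := e1.cexp
    have e3 : HasDerivAt (fun t => g t * Complex.exp (-((R t : ℝ) : ℂ))) _ x := (hgderiv x).fun_mul e2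
    convert e3 using 1
    ring
  have hconst : h T = h 0 := by
    refine is_const_of_deriv_eq_zero (fun x => (hhderiv x).differentiableAt) ?_ T 0
    intro x
    exact (hhderiv x).deriv
  have hR0 : R 0 = 0 := intervalIntegral.integral_same
  have hgT : g T = g 0 * Complex.exp ((R T : ℝ) : ℂ) := by
    have := hconst
    rw [hhdef] at this
    simp only [hR0, Complex.ofReal_zero, neg_zero, Complex.exp_zero, mul_one] at this
    calc g T = g T * (Complex.exp (-((R T : ℝ) : ℂ)) * Complex.exp ((R T : ℝ) : ℂ)) := by
          rw [← Complex.exp_add]; simp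
      _ = (g T * Complex.exp (-((R T : ℝ) : ℂ))) * Complex.exp ((R T : ℝ) : ℂ) := by ring
      _ = g 0 * Complex.exp ((R T : ℝ) : ℂ) := by rw [this]
  have hRT : R T = 2 * I := by
    show ∫ s in (0:ℝ)..T, 2 * (Matrix.trace (A s)).re
      = 2 * ∫ τ in (0:ℝ)..T, (Matrix.trace (A τ)).re
    exact intervalIntegral.integral_const_mul 2 fun τ => (Matrix.trace (A τ)).re
  -- determinant of the monodromy matrix
  have hinv : Ring.inverse (M 0) * M 0 = 1 := Ring.inverse_mul_cancel _ (hMu 0)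
  have hinvdet : (chiMat (Ring.inverse (M 0))).det * g 0 = 1 := by
    rw [hgdef]
    have := congrArg (fun X => (chiMat X).det) hinv
    simpa [Stmt14Aux.chiMat_mul, Stmt14Aux.chiMat_one] using this
  have hdetU : (chiMat (Ring.inverse (M 0) * M T)).det = ((Real.exp (2 * I) : ℝ) : ℂ) := by
    rw [Stmt14Aux.chiMat_mul, Matrix.det_mul]
    calc (chiMat (Ring.inverse (M 0))).det * (chiMat (M T)).det
        = (chiMat (Ring.inverse (M 0))).det * (g 0 * Complex.exp ((R T : ℝ) : ℂ)) := by
          rw [← hgT]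
      _ = ((chiMat (Ring.inverse (M 0))).det * g 0) * Complex.exp ((R T : ℝ) : ℂ) := by ring
      _ = Complex.exp ((R T : ℝ) : ℂ) := by rw [hinvdet, one_mul]
      _ = ((Real.exp (2 * I) : ℝ) : ℂ) := by rw [hRT, Complex.ofReal_exp]
  -- determinant from the characteristic polynomial factorization
  obtain ⟨hcard, him, hcp⟩ := hρ
  have hdetU2 : (chiMat (Ring.inverse (M 0) * M T)).det
      = ((∏ j, ‖ρ j‖ ^ 2 : ℝ) : ℂ) := by
    rw [Matrix.det_eq_sign_charpoly_coeff, hcp, Polynomial.coeff_zero_eq_eval_zero]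
    have hcardeq : Fintype.card (Fin n ⊕ Fin n) = n + n := by simp
    rw [hcardeq, Even.neg_one_pow ⟨n, rfl⟩, one_mul]
    rw [Polynomial.eval_multiset_prod, Multiset.map_map, Multiset.map_map]
    have : ∀ j : Fin n, (Polynomial.eval 0 ((X - C (ρ j)) * (X - C ((starRingEnd ℂ) (ρ j)))))
        = ((‖ρ j‖ ^ 2 : ℝ) : ℂ) := by
      intro j
      simp only [Polynomial.eval_mul, Polynomial.eval_sub, Polynomial.eval_X,
        Polynomial.eval_C, zero_sub, neg_mul_neg]
      rw [Complex.mul_conj, ← Complex.sq_norm]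
    calc (Multiset.map (fun j => Polynomial.eval 0
            ((X - C (ρ j)) * (X - C ((starRingEnd ℂ) (ρ j))))) Finset.univ.val).prod
        = (Multiset.map (fun j : Fin n => ((‖ρ j‖ ^ 2 : ℝ) : ℂ))
            Finset.univ.val).prod := by
          congr 1
          exact Multiset.map_congr rfl fun j _ => this j
      _ = ∏ j, ((‖ρ j‖ ^ 2 : ℝ) : ℂ) := rfl
      _ = ((∏ j, ‖ρ j‖ ^ 2 : ℝ) : ℂ) := by push_cast; rfl
  have hreal : (∏ j, ‖ρ j‖ ^ 2 : ℝ) = Real.exp (2 * I) := by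
    have := hdetU2.symm.trans hdetU
    exact_mod_cast this
  have hprod : (∏ j, ‖ρ j‖) = Real.exp I := by
    have hP2 : (∏ j, ‖ρ j‖) ^ 2 = (Real.exp I) ^ 2 := by
      rw [Finset.prod_pow] at hreal
      rw [hreal, pow_two, ← Real.exp_add]
      ring_nf
    have hPnn : (0:ℝ) ≤ ∏ j, ‖ρ j‖ :=
      Finset.prod_nonneg fun j _ => norm_nonneg _
    have hEpos : (0:ℝ) < Real.exp I := Real.exp_pos _
    nlinarith
  refine ⟨hprod, ?_⟩
  intro μ hμ
  have habs : ∀ j, ‖ρ j‖ = Real.exp ((μ j).re * T) := by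
    intro j
    rw [← hμ j, Complex.norm_exp]
    congr 1
    simp [Complex.mul_re]
  have hsum : Real.exp (∑ j, (μ j).re * T) = Real.exp I := by
    rw [← hprod, Real.exp_sum]
    exact Finset.prod_congr rfl fun j _ => (habs j).symm
  have hTsum : (∑ j, (μ j).re) * T = I := by
    have h' := Real.exp_eq_exp.mp hsum
    rw [← Finset.sum_mul] at h'
    exact h'
  have hre : (∑ j, μ j).re = ∑ j, (μ j).re := by
    rw [Complex.re_sum]
  rw [hre, hIdef] at *
  field_simp at hTsum ⊢
  linarith [hTsum]
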